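/- The element 2 is a prime element in the ring of integers of Q(ζ₇ + ζ₇⁻¹). -/

import Mathlib

open Real Polynomial

noncomputable def gZ : ℤ[X] := X^3 + X^2 - C 2 * X - 1

lemma gZ_monic : gZ.Monic := by unfold gZ; monicity!

lemma gZ_natDegree : gZ.natDegree = 3 := by unfold gZ; compute_degree!

lemma g2_irred : Irreducible (gZ.map (Int.castRingHom (ZMod 2))) := by
  have hm : (gZ.map (Int.castRingHom (ZMod 2))).Monic := gZ_monic.map _
  have hd : (gZ.map (Int.castRingHom (ZMod 2))).natDegree = 3 := by
    rw [gZ_monic.natDegree_map, gZ_natDegree]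
  rw [hm.irreducible_iff_roots_eq_zero_of_degree_le_three (by omega) (by omega)]
  rw [Multiset.eq_zero_iff_forall_notMem]
  intro a ha
  rw [mem_roots hm.ne_zero] at ha
  have h0 : (gZ.map (Int.castRingHom (ZMod 2))).eval a = 0 := ha
  clear ha
  rw [Polynomial.eval_map] at h0
  unfold gZ at h0
  simp [eval₂_sub, eval₂_add] at h0
  revert h0
  revert a
  decide

lemma gZ_irred : Irreducible gZ :=
  gZ_monic.irreducible_of_irreducible_map _ _ g2_irred

lemma gQ_irred : Irreducible (gZ.map (Int.castRingHom ℚ)) :=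
  (Polynomial.IsPrimitive.Int.irreducible_iff_irreducible_map_cast gZ_monic.isPrimitive).mp gZ_irred

lemma alpha_cubic : (2*Real.cos (2*π/7))^3 + (2*Real.cos (2*π/7))^2 - 2*(2*Real.cos (2*π/7)) - 1 = 0 := by
  set c := Real.cos (2*π/7) with hc
  have h4 : Real.cos (4*(2*π/7)) = Real.cos (3*(2*π/7)) := by
    rw [show (4:ℝ)*(2*π/7) = 2*π - 3*(2*π/7) by ring, Real.cos_two_pi_sub]
  have e4 : Real.cos (4*(2*π/7)) = 2*(2*c^2-1)^2 - 1 := by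
    rw [show (4:ℝ)*(2*π/7) = 2*(2*(2*π/7)) by ring, Real.cos_two_mul, Real.cos_two_mul]
  have e3 : Real.cos (3*(2*π/7)) = 4*c^3 - 3*c := Real.cos_three_mul _
  have hne : c ≠ 1 := by
    have h1 : Real.cos (2*π/7) < Real.cos 0 := by
      apply Real.cos_lt_cos_of_nonneg_of_le_pi le_rfl
      · nlinarith [Real.pi_le_four, Real.pi_pos]
      · positivity
    rw [Real.cos_zero] at h1
    exact ne_of_lt h1
  have key : (c - 1) * (8*c^3 + 4*c^2 - 4*c - 1) = 0 := by
    rw [e4, e3] at h4; nlinarith [h4]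
  rcases mul_eq_zero.mp key with h | h
  · exact absurd (by linarith : c = 1) hne
  · nlinarith [h]

lemma surj_isField {F R : Type*} [Field F] [CommRing R] [Nontrivial R]
    (f : F →+* R) (hf : Function.Surjective f) : IsField R := by
  refine ⟨exists_pair_ne R, mul_comm, ?_⟩
  intro r hr
  obtain ⟨a, rfl⟩ := hf r
  have ha : a ≠ 0 := by rintro rfl; simp at hr
  exact ⟨f a⁻¹, by rw [← map_mul, mul_inv_cancel₀ ha, map_one]⟩

set_option maxHeartbeats 2000000 in
set_option synthInstance.maxHeartbeats 1000000 in
/-- `2` is a prime element of the ring of integers of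
`K = ℚ(ζ₇ + ζ₇⁻¹)`. -/
theorem two_is_prime
    (K : IntermediateField ℚ ℝ)
    (hK : K = IntermediateField.adjoin ℚ {(2 * Real.cos (2 * π / 7) : ℝ)}) :
    Prime (2 : NumberField.RingOfIntegers K) := by
  set αR : ℝ := 2 * Real.cos (2 * π / 7) with hαR
  -- α as an element of K
  have hmem : αR ∈ K := by
    rw [hK]; exact IntermediateField.mem_adjoin_simple_self ℚ αR
  set α : K := ⟨αR, hmem⟩ with hα
  -- α satisfies gZ
  have hcube : α^3 + α^2 - 2*α - 1 = 0 := by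
    ext
    push_cast
    simpa [show ((2:K):ℝ) = 2 from rfl] using alpha_cubic
  have haevR : (Polynomial.aeval αR) gZ = 0 := by
    simp only [gZ, map_add, map_sub, map_pow, map_mul, map_one, aeval_X, aeval_C, map_ofNat]
    linear_combination alpha_cubic
  have hint : IsIntegral ℤ α := ⟨gZ, gZ_monic, by
    rw [← Polynomial.aeval_def]
    simp only [gZ, map_add, map_sub, map_pow, map_mul, map_one, aeval_X, aeval_C, map_ofNat]
    linear_combination hcube⟩
  have hintQ : IsIntegral ℚ αR := ⟨gZ.map (Int.castRingHom ℚ), gZ_monic.map _, by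
    rw [← Polynomial.aeval_def, ← algebraMap_int_eq, Polynomial.aeval_map_algebraMap]
    exact haevR⟩
  haveI : FiniteDimensional ℚ K := by
    rw [hK]; exact IntermediateField.adjoin.finiteDimensional hintQ
  haveI : NumberField K := ⟨⟩
  -- finrank = 3
  have hminp : minpoly ℚ αR = gZ.map (Int.castRingHom ℚ) := by
    refine (minpoly.eq_of_irreducible_of_monic gQ_irred ?_ (gZ_monic.map _)).symm
    rw [← algebraMap_int_eq, Polynomial.aeval_map_algebraMap]
    exact haevR
  have hfinrank : Module.finrank ℚ K = 3 := by
    rw [hK, IntermediateField.adjoin.finrank hintQ, hminp, gZ_monic.natDegree_map, gZ_natDegree]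
  -- the element α as an element of the ring of integers
  set a : NumberField.RingOfIntegers K := ⟨α, hint⟩ with ha2
  have ha3 : a^3 + a^2 - 2*a - 1 = 0 := by
    refine NumberField.RingOfIntegers.ext ?_
    exact hcube
  set I : Ideal (NumberField.RingOfIntegers K) := Ideal.span {(2 : NumberField.RingOfIntegers K)}
    with hI
  have hrank : Module.finrank ℤ (NumberField.RingOfIntegers K) = 3 := by
    rw [NumberField.RingOfIntegers.rank, hfinrank]
  -- the quotient has cardinality 8
  have hnorm : Ideal.absNorm I = 8 := by
    rw [hI, Ideal.absNorm_span_singleton]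
    have h2' : (2 : NumberField.RingOfIntegers K) =
        algebraMap ℤ (NumberField.RingOfIntegers K) 2 := by norm_num
    rw [h2', Algebra.norm_algebraMap_of_basis (Module.Free.chooseBasis ℤ _),
      ← Module.finrank_eq_card_chooseBasisIndex, hrank]
    norm_num
  have hcardQ : Nat.card (NumberField.RingOfIntegers K ⧸ I) = 8 := by
    rw [← hnorm, Ideal.absNorm_apply, Submodule.cardQuot_apply]
  haveI : Finite (NumberField.RingOfIntegers K ⧸ I) :=
    Nat.finite_of_card_ne_zero (by rw [hcardQ]; norm_num)
  have hItop : I ≠ ⊤ := by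
    intro h
    rw [h, Ideal.absNorm_top] at hnorm
    norm_num at hnorm
  haveI : Nontrivial (NumberField.RingOfIntegers K ⧸ I) := Ideal.Quotient.nontrivial_iff.mpr hItop
  -- characteristic 2
  have h2Q : ((2 : ℕ) : NumberField.RingOfIntegers K ⧸ I) = 0 := by
    have : ((Ideal.Quotient.mk I) (2 : NumberField.RingOfIntegers K)) = 0 :=
      Ideal.Quotient.eq_zero_iff_mem.mpr (Ideal.mem_span_singleton_self _)
    exact this
  haveI : CharP (NumberField.RingOfIntegers K ⧸ I) 2 :=
    (CharP.charP_iff_prime_eq_zero Nat.prime_two).mpr h2Q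
  -- the map from F₈ = F₂[X]/(gZ mod 2) to OK/I
  set f2 : (ZMod 2)[X] := gZ.map (Int.castRingHom (ZMod 2)) with hf2
  haveI : Fact (Irreducible f2) := ⟨g2_irred⟩
  have hroot2 : f2.eval₂ (ZMod.castHom dvd_rfl (NumberField.RingOfIntegers K ⧸ I))
      ((Ideal.Quotient.mk I) a) = 0 := by
    rw [hf2, Polynomial.eval₂_map]
    have hcomp : (ZMod.castHom dvd_rfl (NumberField.RingOfIntegers K ⧸ I)).comp
        (Int.castRingHom (ZMod 2)) =
        (Ideal.Quotient.mk I).comp (Int.castRingHom (NumberField.RingOfIntegers K)) :=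
      RingHom.ext_int _ _
    rw [hcomp, ← Polynomial.hom_eval₂]
    have hz : Polynomial.eval₂ (Int.castRingHom (NumberField.RingOfIntegers K)) a gZ = 0 := by
      simp only [gZ, eval₂_add, eval₂_sub, eval₂_pow, eval₂_mul, eval₂_X, eval₂_C,
        eval₂_one, eval₂_ofNat, map_ofNat]
      linear_combination ha3
    rw [hz, map_zero]
  set φ : AdjoinRoot f2 →+* (NumberField.RingOfIntegers K ⧸ I) :=
    AdjoinRoot.lift (ZMod.castHom dvd_rfl _) ((Ideal.Quotient.mk I) a) hroot2 with hφ
  have hinj : Function.Injective φ := φ.injective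
  have hcard8 : Nat.card (AdjoinRoot f2) = 8 := by
    have hne : f2 ≠ 0 := (gZ_monic.map _).ne_zero
    rw [Nat.card_congr (AdjoinRoot.powerBasis hne).basis.equivFun.toEquiv]
    have hd : f2.natDegree = 3 := by rw [hf2, gZ_monic.natDegree_map, gZ_natDegree]
    simp [Nat.card_eq_fintype_card, hd]
  have hbij : Function.Bijective φ :=
    (Nat.bijective_iff_injective_and_card φ).mpr ⟨hinj, by rw [hcard8, hcardQ]⟩
  have hfield : IsField (NumberField.RingOfIntegers K ⧸ I) := surj_isField φ hbij.surjective
  have hmax : I.IsMaximal := Ideal.Quotient.maximal_of_isField I hfield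
  rw [← Ideal.span_singleton_prime (two_ne_zero (α := NumberField.RingOfIntegers K))]
  exact hmax.isPrime
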